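/- Let n ≥ 29 be an integer, let F_n be the n-th Fibonacci number, set G_1 = 0, G_2 = F_n, G_3 = 2^n, let α^(1) < α^(2) < α^(3) be the three real roots of f_n(X) = X·(X − F_n)·(X − 2^n) − 1, and set l_i^(k) = log|α^(k) − G_i|. Let (x, y) be an integer solution of x·(x − F_n·y)·(x − 2^n·y) − y³ = ±1 with |y| ≥ 2, set β^(i) = x − α^(i)·y, and let j ∈ {1,2,3} be such that |β^(j)| = min{|β^(1)|, |β^(2)|, |β^(3)|}, with {j, k, l} = {1,2,3}. Then for i = k and i = l one has |log|β^(i)| − log|y| − l_j^(i)| ≤ 0.4^n. -/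
import Mathlib


private lemma two_mul_fib_le : ∀ n : ℕ, 2 * Nat.fib n ≤ 2 ^ n := by
  intro n
  induction n using Nat.twoStepInduction with
  | zero => simp
  | one => simp
  | more n ih1 ih2 =>
    rw [Nat.fib_add_two]
    have h : (2:ℕ)^n + 2^(n+1) ≤ 2^(n+2) := by
      calc (2:ℕ)^n + 2^(n+1) ≤ 2^(n+1) + 2^(n+1) := by
            have := Nat.pow_le_pow_right (by norm_num : 1 ≤ 2) (Nat.le_succ n)
            omega
      _ = 2^(n+2) := by ring
    omega

private lemma pow_le_fib_sq : ∀ n : ℕ, n ≠ 0 → 2 ^ n ≤ 4 * Nat.fib n ^ 2 := by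
  intro n
  induction n using Nat.twoStepInduction with
  | zero => simp
  | one => intro _; simp
  | more n ih1 _ =>
    intro _
    rcases Nat.eq_zero_or_pos n with rfl | hn
    · norm_num
    · have h1 := ih1 (by omega)
      have h2 : 2 * Nat.fib n ≤ Nat.fib (n+2) := by
        rw [Nat.fib_add_two]
        have := Nat.fib_le_fib_succ (n := n)
        omega
      calc 2^(n+2) = 4 * 2^n := by ring
      _ ≤ 4 * (4 * Nat.fib n ^2) := by omega
      _ = 4 * (2*Nat.fib n)^2 := by ring
      _ ≤ 4 * (Nat.fib (n+2))^2 := by nlinarith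

private lemma cube_le_one {b : ℝ} (hb : 0 ≤ b) (h : b * (b * b) ≤ 1) : b ≤ 1 := by
  nlinarith

private lemma inv_one_sub_le {t : ℝ} (h0 : 0 < t) (h1 : t ≤ 1/1000) :
    (1 - t)⁻¹ ≤ 1 + 2*t := by
  rw [inv_le_iff_one_le_mul₀ (by linarith)]
  nlinarith

set_option maxHeartbeats 800000 in
private lemma log_aux (x y Aj Ai Am Gj Gi Gm F N a E : ℝ)
    (hF : 8192 ≤ F) (hN2 : F * 2 ≤ N) (ha : a = 8 / (F * N))
    (hcj : |Aj - Gj| ≤ a) (hci : |Ai - Gi| ≤ a) (hcm : |Am - Gm| ≤ a)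
    (hgi : F ≤ |Gj - Gi|) (hgm : F ≤ |Gj - Gm|)
    (hgiN : |Gj - Gi| ≤ N) (hgmN : |Gj - Gm| ≤ N)
    (hgp : F * N / 2 ≤ |Gj - Gi| * |Gj - Gm|)
    (hy : 2 ≤ |y|)
    (hprod : |(x - Aj * y) * ((x - Ai * y) * (x - Am * y))| = 1)
    (hmin1 : |x - Aj * y| ≤ |x - Ai * y|) (hmin2 : |x - Aj * y| ≤ |x - Am * y|)
    (hE : 40 / (F ^ 2 * N) ≤ E) :
    |Real.log (|x - Ai * y|) - Real.log (|y|) - Real.log (|Ai - Gj|)| ≤ E := by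
  have hF0 : (0:ℝ) < F := by linarith
  have hN16 : (16384:ℝ) ≤ N := by linarith
  have hN0 : (0:ℝ) < N := by linarith
  have hFN0 : 0 < F * N := by positivity
  have hFNbig : (134217728:ℝ) ≤ F * N := by
    calc (134217728:ℝ) = 8192 * 16384 := by norm_num
    _ ≤ F * N := mul_le_mul hF hN16 (by norm_num) (by linarith)
  have ha0 : 0 < a := by rw [ha]; positivity
  have ha1 : a * (F * N) = 8 := by rw [ha]; field_simp
  have hasmall : a ≤ 1 / 1000000 := by
    rw [ha, div_le_div_iff₀ hFN0 (by norm_num)]; linarith [hFNbig]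
  set bj := |x - Aj * y| with hbj
  set bi := |x - Ai * y| with hbi
  set bm := |x - Am * y| with hbm
  have hbj0 : 0 ≤ bj := abs_nonneg _
  have hbi0 : 0 ≤ bi := abs_nonneg _
  have hbm0 : 0 ≤ bm := abs_nonneg _
  have hprodm : bj * (bi * bm) = 1 := by
    rw [hbj, hbi, hbm, ← abs_mul, ← abs_mul]; exact hprod
  -- gap estimates
  have hgapi : |Gj - Gi| - 2*a ≤ |Aj - Ai| := by
    have h1 : |Gj - Gi| ≤ |Gj - Aj| + |Aj - Gi| := abs_sub_le _ _ _
    have h2 : |Aj - Gi| ≤ |Aj - Ai| + |Ai - Gi| := abs_sub_le _ _ _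
    have h3 : |Gj - Aj| = |Aj - Gj| := abs_sub_comm _ _
    linarith
  have hgapm : |Gj - Gm| - 2*a ≤ |Aj - Am| := by
    have h1 : |Gj - Gm| ≤ |Gj - Aj| + |Aj - Gm| := abs_sub_le _ _ _
    have h2 : |Aj - Gm| ≤ |Aj - Am| + |Am - Gm| := abs_sub_le _ _ _
    have h3 : |Gj - Aj| = |Aj - Gj| := abs_sub_comm _ _
    linarith
  have hg1 : F - 2*a ≤ |Aj - Ai| := by linarith
  have hg1m : F - 2*a ≤ |Aj - Am| := by linarith
  -- bj ≤ 1
  have hbj1 : bj ≤ 1 := by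
    have h2 : bj * bj ≤ bi * bm := mul_le_mul hmin1 hmin2 hbj0 hbi0
    have h3 : bj * (bj * bj) ≤ bj * (bi * bm) := mul_le_mul_of_nonneg_left h2 hbj0
    rw [hprodm] at h3
    exact cube_le_one hbj0 h3
  -- lower bounds on bi, bm
  have habs_sub : ∀ u v : ℝ, |u - v| ≤ |u| + |v| := fun u v => by
    rw [sub_eq_add_neg]; exact (abs_add_le _ _).trans (by rw [abs_neg])
  have hbi_lb : |Aj - Ai| * |y| ≤ 2 * bi := by
    have h1 : |Aj - Ai| * |y| = |(x - Ai*y) - (x - Aj*y)| := by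
      rw [← abs_mul]; congr 1; ring
    have h2 := habs_sub (x - Ai*y) (x - Aj*y)
    rw [← hbi, ← hbj] at h2
    linarith [h1 ▸ h2]
  have hbm_lb : |Aj - Am| * |y| ≤ 2 * bm := by
    have h1 : |Aj - Am| * |y| = |(x - Am*y) - (x - Aj*y)| := by
      rw [← abs_mul]; congr 1; ring
    have h2 := habs_sub (x - Am*y) (x - Aj*y)
    rw [← hbm, ← hbj] at h2
    linarith [h1 ▸ h2]
  have hbi_pos : F / 2 ≤ bi := by
    have h1 : (F - 2*a) * 2 ≤ |Aj - Ai| * |y| :=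
      mul_le_mul hg1 hy (by norm_num) (abs_nonneg _)
    linarith [hbi_lb, hasmall]
  have hbm_pos : F / 2 ≤ bm := by
    have h1 : (F - 2*a) * 2 ≤ |Aj - Am| * |y| :=
      mul_le_mul hg1m hy (by norm_num) (abs_nonneg _)
    linarith [hbm_lb, hasmall]
  -- product lower bound
  have haN : a * N ≤ 1 := by
    rw [ha]; rw [div_mul_eq_mul_div, div_le_one hFN0]
    have := mul_le_mul_of_nonneg_right hF hN0.le
    linarith
  have hgg : F*N/2 - 4 ≤ |Aj - Ai| * |Aj - Am| := by
    have h1 : (|Gj - Gi| - 2*a) * (|Gj - Gm| - 2*a) ≤ |Aj - Ai| * |Aj - Am| :=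
      mul_le_mul hgapi hgapm (by linarith) (abs_nonneg _)
    have e : (|Gj - Gi| - 2*a) * (|Gj - Gm| - 2*a)
        = |Gj - Gi| * |Gj - Gm| - 2*(a * |Gj - Gi|) - 2*(a * |Gj - Gm|) + 4*a^2 := by ring
    have q1 : a * |Gj - Gi| ≤ a*N := mul_le_mul_of_nonneg_left hgiN ha0.le
    have q2 : a * |Gj - Gm| ≤ a*N := mul_le_mul_of_nonneg_left hgmN ha0.le
    have q3 : (0:ℝ) ≤ a^2 := sq_nonneg a
    linarith [h1, e ▸ h1, hgp, haN]
  have hprodim : F*N/4 ≤ bi * bm := by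
    have h3 : (|Aj - Ai| * (|y|)) * (|Aj - Am| * (|y|)) ≤ (2*bi) * (2*bm) :=
      mul_le_mul hbi_lb hbm_lb (by positivity) (by linarith)
    have e2 : (|Aj - Ai| * (|y|)) * (|Aj - Am| * (|y|))
        = (|Aj - Ai| * |Aj - Am|) * (|y|^2) := by ring
    have hy4 : (4:ℝ) ≤ |y|^2 := by
      calc (4:ℝ) = 2*2 := by norm_num
      _ ≤ |y| * |y| := mul_le_mul hy hy (by norm_num) (abs_nonneg y)
      _ = |y|^2 := by ring
    have h5 : (F*N/2 - 4) * 4 ≤ (|Aj - Ai| * |Aj - Am|) * (|y|^2) :=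
      mul_le_mul hgg hy4 (by norm_num) (by positivity)
    have e3 : (2*bi) * (2*bm) = 4*(bi*bm) := by ring
    linarith [e2 ▸ h3]
  have hbj_ub : 2 * bj ≤ a := by
    have h4 : bj * (F*N/4) ≤ bj * (bi * bm) := mul_le_mul_of_nonneg_left hprodim hbj0
    rw [hprodm] at h4
    have h6 : bj ≤ 4/(F*N) := by
      rw [le_div_iff₀ hFN0]
      nlinarith [h4]
    have e : (8:ℝ)/(F*N) = 2*(4/(F*N)) := by ring
    rw [ha]
    linarith [e, h6]
  -- D lower bound
  have hD_lb : F - a ≤ |Ai - Gj| := by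
    have h1 : |Gj - Gi| ≤ |Gj - Ai| + |Ai - Gi| := abs_sub_le _ _ _
    have h2 : |Gj - Ai| = |Ai - Gj| := abs_sub_comm _ _
    linarith
  set D := |Ai - Gj| with hD
  have hD0 : (0:ℝ) < D := by linarith [hD_lb, hasmall]
  -- numerator bound
  have hnum : |bi - D * (|y|)| ≤ bj + a * (|y|) := by
    have h1 : |(x - Ai*y) - (Gj - Ai)*y| ≤ bj + a*(|y|) := by
      have e1 : (x - Ai*y) - (Gj - Ai)*y = (x - Aj*y) + (Aj - Gj)*y := by ring
      rw [e1]
      refine (abs_add_le _ _).trans ?_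
      rw [abs_mul]
      have := mul_le_mul_of_nonneg_right hcj (abs_nonneg y)
      rw [← hbj]
      linarith
    have h3 : |(Gj - Ai)*y| = D * |y| := by rw [abs_mul, abs_sub_comm]
    have h4 : |bi - D*(|y|)| ≤ |(x - Ai*y) - (Gj - Ai)*y| := by
      rw [hbi, ← h3]; exact abs_abs_sub_abs_le_abs_sub _ _
    exact h4.trans h1
  set t : ℝ := 20 / (F^2*N) with htdef
  have ht0 : 0 < t := by rw [htdef]; positivity
  have htFN : t * (F^2*N) = 20 := by rw [htdef]; field_simp
  have htsmall : t ≤ 1/1000 := by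
    rw [htdef, div_le_div_iff₀ (by positivity) (by norm_num)]
    have step1 : (8192:ℝ) * 134217728 ≤ F * 134217728 :=
      mul_le_mul_of_nonneg_right hF (by norm_num)
    have step2 : F * 134217728 ≤ F * (F*N) := mul_le_mul_of_nonneg_left hFNbig hF0.le
    linarith [step1, step2]
  have htF : t * F = 20 / (F*N) := by
    rw [htdef]; rw [div_mul_eq_mul_div, div_eq_div_iff (by positivity) (by positivity)]; ring
  have h20a : 20 / (F*N) = 20/8 * a := by rw [ha]; ring
  have hta : 2*a ≤ t*(F - a) := by
    have h5 : t * a ≤ a / 1000 := by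
      calc t * a ≤ (1/1000) * a := mul_le_mul_of_nonneg_right htsmall ha0.le
      _ = a / 1000 := by ring
    linarith [htF, h20a, h5]
  have hkey : |bi - D * (|y|)| ≤ t * (|y| * D) := by
    have p1 : 2*a*(|y|) ≤ t*(F - a)*(|y|) := mul_le_mul_of_nonneg_right hta (abs_nonneg y)
    have p2 : t*(|y|)*(F - a) ≤ t*(|y|)*D := mul_le_mul_of_nonneg_left hD_lb (by positivity)
    have p3 : a*2 ≤ a*(|y|) := mul_le_mul_of_nonneg_left hy ha0.le
    linarith [hnum, hbj_ub, p1, p2, p3, ha0.le]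
  have hyD0 : 0 < |y| * D := by positivity
  set z : ℝ := bi / (|y| * D) with hz
  have hz_ub : z ≤ 1 + t := by
    rw [hz, div_le_iff₀ hyD0]
    have h7 := (abs_le.mp hkey).2
    linarith [h7]
  have hz_lb : 1 - t ≤ z := by
    rw [hz, le_div_iff₀ hyD0]
    have h7 := (abs_le.mp hkey).1
    linarith [h7]
  have hz0 : 0 < z := by linarith
  have hlog_ub : Real.log z ≤ 2*t :=
    le_trans (Real.log_le_sub_one_of_pos hz0) (by linarith)
  have hlog_lb : -(2*t) ≤ Real.log z := by
    have h1 : Real.log z⁻¹ ≤ z⁻¹ - 1 := Real.log_le_sub_one_of_pos (by positivity)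
    rw [Real.log_inv] at h1
    have h2 : z⁻¹ ≤ (1 - t)⁻¹ := by
      apply inv_anti₀ (by linarith) hz_lb
    have h3 : (1 - t)⁻¹ ≤ 1 + 2*t := inv_one_sub_le ht0 htsmall
    linarith
  have hbi_ne : bi ≠ 0 := ne_of_gt (by linarith : (0:ℝ) < bi)
  have hy_ne : |y| ≠ (0:ℝ) := ne_of_gt (by linarith : (0:ℝ) < |y|)
  have hD_ne : D ≠ 0 := ne_of_gt hD0
  have hlogz : Real.log bi - Real.log |y| - Real.log D = Real.log z := by
    rw [hz, Real.log_div hbi_ne (ne_of_gt hyD0), Real.log_mul hy_ne hD_ne]; ring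
  rw [hlogz]
  have h2t : 2*t = 40/(F^2*N) := by rw [htdef]; ring
  rw [abs_le]
  constructor <;> linarith [hlog_ub, hlog_lb, h2t, hE]

set_option maxHeartbeats 1000000 in
/-- For a solution `(x, y)` with `|y| ≥ 2` of type `j`, and `i ≠ j`, one has
`log |β⁽ⁱ⁾| = log |y| + l j i + L(0.4ⁿ)` where `l j i = log |α⁽ⁱ⁾ - G_j|`. -/
theorem log_beta_estimate (n : ℕ) (hn : 29 ≤ n)
    (G α : Fin 3 → ℝ)
    (hG : G = ![0, (Nat.fib n : ℝ), 2 ^ n])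
    (hord : α 0 < α 1 ∧ α 1 < α 2)
    (hroot : ∀ i, α i * (α i - (Nat.fib n : ℝ)) * (α i - 2 ^ n) - 1 = 0)
    (x y : ℤ)
    (heq : x * (x - (Nat.fib n : ℤ) * y) * (x - 2 ^ n * y) - y ^ 3 = 1 ∨
           x * (x - (Nat.fib n : ℤ) * y) * (x - 2 ^ n * y) - y ^ 3 = -1)
    (hy : 2 ≤ |y|)
    (β : Fin 3 → ℝ) (hβ : ∀ i, β i = (x : ℝ) - α i * (y : ℝ))
    (j : Fin 3) (hmin : ∀ i, |β j| ≤ |β i|) :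
    ∀ i, i ≠ j →
      |Real.log (|β i|) - Real.log (|(y : ℝ)|) - Real.log (|α i - G j|)| ≤
        (0.4 : ℝ) ^ n := by
  have hf1' := two_mul_fib_le n
  have hf2' := pow_le_fib_sq n (by omega)
  set F : ℝ := (Nat.fib n : ℝ) with hFdef
  set N : ℝ := (2:ℝ)^n with hNdef
  have hf1 : 2 * F ≤ N := by
    rw [hFdef, hNdef]; exact_mod_cast hf1'
  have hf2 : N ≤ 4 * F^2 := by
    rw [hFdef, hNdef]; exact_mod_cast hf2'
  have hN29 : (2:ℝ)^29 ≤ N := by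
    rw [hNdef]; exact pow_le_pow_right₀ (by norm_num) hn
  have hNval : (536870912:ℝ) ≤ N := by
    calc (536870912:ℝ) = 2^29 := by norm_num
    _ ≤ N := hN29
  have hF0 : (0:ℝ) ≤ F := by rw [hFdef]; positivity
  have hF8192 : (8192:ℝ) ≤ F := by nlinarith [hf2, hNval, hF0]
  have hFpos : (0:ℝ) < F := by linarith
  have hN0 : (0:ℝ) < N := by linarith
  have hFN0 : (0:ℝ) < F * N := by positivity
  have hFNbig : (134217728:ℝ) ≤ F * N := by
    calc (134217728:ℝ) = 8192 * 16384 := by norm_num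
    _ ≤ F * N := mul_le_mul hF8192 (by linarith) (by norm_num) (by linarith)
  have hq5 : 2*F^2 ≤ F*N := by
    have := mul_le_mul_of_nonneg_left hf1 hF0
    linarith [this]
  have hq7 : 2*(F*N) ≤ N^2 := by
    have := mul_le_mul_of_nonneg_left hf1 hN0.le
    linarith [this]
  set a : ℝ := 8 / (F * N) with ha
  set c : ℝ := 8 / N^2 with hc
  have ha0 : (0:ℝ) < a := by rw [ha]; positivity
  have hc0 : (0:ℝ) < c := by rw [hc]; positivity
  have hasmall : a ≤ 1 / 1000000 := by
    rw [ha, div_le_div_iff₀ hFN0 (by norm_num)]; linarith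
  have hcsmall : c ≤ 1 / 1000000 := by
    rw [hc, div_le_div_iff₀ (by positivity) (by norm_num)]
    have h1 : (16384:ℝ) * 16384 ≤ N * N := by
      have := mul_le_mul (le_of_lt (by linarith : (16384:ℝ) < N))
        (le_of_lt (by linarith : (16384:ℝ) < N)) (by norm_num) (by linarith)
      linarith [this]
    have e : N^2 = N * N := sq N
    linarith
  have hca : c ≤ a := by
    rw [hc, ha]
    apply div_le_div_of_nonneg_left (by norm_num) hFN0
    have e : N^2 = N * N := sq N
    have h1 : F * N ≤ N * N := mul_le_mul_of_nonneg_right (by linarith) (by linarith)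
    linarith
  have hsep1 : a < F - a := by linarith
  have hFltN : F < N := by linarith
  have haltN : a < N := by linarith
  -- localization of roots
  have hall : ∀ t : ℝ, t*(t-F)*(t-N) - 1 = 0 →
      (0 < t ∧ t < a) ∨ (F - a < t ∧ t < F) ∨ (N < t ∧ t < N + c) := by
    intro t ht
    have ht' : t*((F-t)*(N-t)) = 1 := by linear_combination ht
    rcases le_or_gt t 0 with h0 | h0
    · exfalso
      have hp : 0 ≤ (F-t)*(N-t) := mul_nonneg (by linarith) (by linarith)
      have hq := mul_nonneg (neg_nonneg.mpr h0) hp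
      linarith [hq, ht']
    rcases lt_or_ge t a with h2 | h2
    · exact Or.inl ⟨h0, h2⟩
    rcases le_or_gt t (F - a) with h3 | h3
    · exfalso
      rcases le_or_gt t (F/2) with h4 | h4
      · have hlb : a * ((F/2) * (3*N/4)) ≤ t * ((F-t)*(N-t)) := by
          apply mul_le_mul h2 _ (by positivity) (by linarith)
          apply mul_le_mul (by linarith) (by linarith) (by linarith) (by linarith)
        have hval : a * ((F/2) * (3*N/4)) = 3 := by
          rw [ha]; field_simp; ring
        linarith
      · have hlb : (F/2) * (a * (N/2)) ≤ t * ((F-t)*(N-t)) := by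
          apply mul_le_mul (by linarith) _ (by positivity) (by linarith)
          apply mul_le_mul (by linarith) (by linarith) (by linarith) (by linarith)
        have hval : (F/2) * (a * (N/2)) = 2 := by
          rw [ha]; field_simp; ring
        linarith
    rcases lt_or_ge t F with h5 | h5
    · exact Or.inr (Or.inl ⟨h3, h5⟩)
    rcases le_or_gt t N with h6 | h6
    · exfalso
      have hp : 0 ≤ t * ((t - F)*(N - t)) :=
        mul_nonneg (by linarith) (mul_nonneg (by linarith) (by linarith))
      linarith [hp, ht']
    rcases lt_or_ge t (N + c) with h7 | h7
    · exact Or.inr (Or.inr ⟨h6, h7⟩)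
    · exfalso
      have hlb : N * ((N/2) * c) ≤ t * ((t-F)*(t-N)) := by
        apply mul_le_mul (by linarith) _ (by positivity) (by linarith)
        apply mul_le_mul (by linarith) (by linarith) (by linarith) (by linarith)
      have hval : N * ((N/2) * c) = 4 := by
        rw [hc]; field_simp; ring
      linarith [hlb, ht, hval]
  -- at most one root in each window
  have h2a1 : (F+N)*(2*a) ≤ 1 := by
    rw [ha]
    have e : (F+N)*(2*(8/(F*N))) = (16*(F+N))/(F*N) := by field_simp; ring
    rw [e, div_le_one hFN0]
    have q1 : 32*N ≤ F*N := mul_le_mul_of_nonneg_right (by linarith) hN0.le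
    have q2 : F*32 ≤ F*N := mul_le_mul_of_nonneg_left (by linarith) hF0
    linarith
  have h2c1 : (F+N)*(2*c) ≤ 1 := by
    rw [hc]
    have e : (F+N)*(2*(8/N^2)) = (16*(F+N))/(N^2) := by field_simp; ring
    rw [e, div_le_one (by positivity)]
    have e2 : N^2 = N * N := sq N
    have q1 : 32*N ≤ N*N := mul_le_mul_of_nonneg_right (by linarith) hN0.le
    have q2 : 32*F ≤ 32*N := by linarith
    linarith
  have hu1 : ∀ s t : ℝ, s < t → s*(s-F)*(s-N) - 1 = 0 → t*(t-F)*(t-N) - 1 = 0 →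
      0 < s → t < a → False := by
    intro s t hst hs ht hs0 hta
    have hB : (t - s) * (t^2 + t*s + s^2 - (F+N)*(t+s) + F*N) = 0 := by
      linear_combination ht - hs
    have hB0 : t^2 + t*s + s^2 - (F+N)*(t+s) + F*N = 0 :=
      (mul_eq_zero.mp hB).resolve_left (sub_ne_zero.mpr hst.ne')
    have q1 : (F+N)*(t+s) ≤ (F+N)*(2*a) := by
      apply mul_le_mul_of_nonneg_left (by linarith) (by linarith)
    have q2 : (0:ℝ) ≤ t^2 := sq_nonneg t
    have q3 : (0:ℝ) ≤ s^2 := sq_nonneg s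
    have q4 : (0:ℝ) ≤ t*s := mul_nonneg (by linarith) hs0.le
    linarith [hFNbig]
  have hu2 : ∀ s t : ℝ, s < t → s*(s-F)*(s-N) - 1 = 0 → t*(t-F)*(t-N) - 1 = 0 →
      F - a < s → t < F → False := by
    intro s t hst hs ht hsl htu
    have hB : (t - s) * (t^2 + t*s + s^2 - (F+N)*(t+s) + F*N) = 0 := by
      linear_combination ht - hs
    have hB0 : t^2 + t*s + s^2 - (F+N)*(t+s) + F*N = 0 :=
      (mul_eq_zero.mp hB).resolve_left (sub_ne_zero.mpr hst.ne')
    have hs0 : 0 < s := by linarith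
    have q1 : (F+N)*(2*(F-a)) ≤ (F+N)*(t+s) := by
      apply mul_le_mul_of_nonneg_left (by linarith) (by linarith)
    have e1 : (F+N)*(2*(F-a)) = 2*F^2 + 2*(F*N) - (F+N)*(2*a) := by ring
    have q2 : t^2 ≤ F^2 := by
      have := mul_le_mul htu.le htu.le (by linarith : (0:ℝ) ≤ t) hF0
      linarith [this]
    have q3 : s^2 ≤ F^2 := by
      have := mul_le_mul (by linarith : s ≤ F) (by linarith : s ≤ F) hs0.le hF0
      linarith [this]
    have q4 : t*s ≤ F^2 := by
      have := mul_le_mul htu.le (by linarith : s ≤ F) hs0.le hF0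
      linarith [this]
    have q6 : (2:ℝ) ≤ F^2 := by linarith [sq_nonneg (F - 8192)]
    linarith [hB0, q1, e1 ▸ q1, h2a1, hq5, q2, q3, q4, q6]
  have hu3 : ∀ s t : ℝ, s < t → s*(s-F)*(s-N) - 1 = 0 → t*(t-F)*(t-N) - 1 = 0 →
      N < s → t < N + c → False := by
    intro s t hst hs ht hsl htu
    have hB : (t - s) * (t^2 + t*s + s^2 - (F+N)*(t+s) + F*N) = 0 := by
      linear_combination ht - hs
    have hB0 : t^2 + t*s + s^2 - (F+N)*(t+s) + F*N = 0 :=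
      (mul_eq_zero.mp hB).resolve_left (sub_ne_zero.mpr hst.ne')
    have q1 : (F+N)*(t+s) ≤ (F+N)*(2*(N+c)) := by
      apply mul_le_mul_of_nonneg_left (by linarith) (by linarith)
    have e1 : (F+N)*(2*(N+c)) = 2*(F*N) + 2*N^2 + (F+N)*(2*c) := by ring
    have hNt : N ≤ t := by linarith
    have hNs : N ≤ s := by linarith
    have q2 : N^2 ≤ t^2 := by
      have := mul_le_mul hNt hNt hN0.le (by linarith : (0:ℝ) ≤ t)
      linarith [this]
    have q3 : N^2 ≤ s^2 := by
      have := mul_le_mul hNs hNs hN0.le (by linarith : (0:ℝ) ≤ s)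
      linarith [this]
    have q4 : N^2 ≤ t*s := by
      have := mul_le_mul hNt hNs hN0.le (by linarith : (0:ℝ) ≤ t)
      linarith [this]
    have q6 : (2:ℝ) ≤ N^2 := by linarith [sq_nonneg (N - 16384)]
    linarith [hB0, q1, e1 ▸ q1, h2c1, hq7, q2, q3, q4, q6]
  -- distribution of the three roots
  have hI1 : 0 < α 0 ∧ α 0 < a := by
    rcases hall _ (hroot 0) with h | h | h
    · exact h
    · exfalso
      rcases hall _ (hroot 1) with h1 | h1 | h1
      · linarith [hord.1, h.1, h1.2]
      · exact hu2 _ _ hord.1 (hroot 0) (hroot 1) h.1 h1.2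
      · rcases hall _ (hroot 2) with h2 | h2 | h2
        · linarith [hord.2, h1.1, h2.2]
        · linarith [hord.2, h1.1, h2.2]
        · exact hu3 _ _ hord.2 (hroot 1) (hroot 2) h1.1 h2.2
    · exfalso
      rcases hall _ (hroot 1) with h1 | h1 | h1
      · linarith [hord.1, h.1, h1.2]
      · linarith [hord.1, h.1, h1.2]
      · exact hu3 _ _ hord.1 (hroot 0) (hroot 1) h.1 h1.2
  have hI2 : F - a < α 1 ∧ α 1 < F := by
    rcases hall _ (hroot 1) with h | h | h
    · exact (hu1 _ _ hord.1 (hroot 0) (hroot 1) hI1.1 h.2).elim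
    · exact h
    · exfalso
      rcases hall _ (hroot 2) with h2 | h2 | h2
      · linarith [hord.2, h.1, h2.2]
      · linarith [hord.2, h.1, h2.2]
      · exact hu3 _ _ hord.2 (hroot 1) (hroot 2) h.1 h2.2
  have hI3 : N < α 2 ∧ α 2 < N + c := by
    rcases hall _ (hroot 2) with h | h | h
    · exact (hu1 _ _ (hord.1.trans hord.2) (hroot 0) (hroot 2) hI1.1 h.2).elim
    · exact (hu2 _ _ hord.2 (hroot 1) (hroot 2) hI2.1 h.2).elim
    · exact h
  -- G values
  have hG0 : G 0 = 0 := by rw [hG]; rfl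
  have hG1 : G 1 = F := by rw [hG]; rfl
  have hG2 : G 2 = N := by rw [hG]; rfl
  -- closeness
  have hcl0 : |α 0 - 0| ≤ a := by
    rw [sub_zero, abs_of_pos hI1.1]; exact hI1.2.le
  have hcl1 : |α 1 - F| ≤ a := by
    rw [abs_of_nonpos (by linarith [hI2.2])]; linarith [hI2.1]
  have hcl2 : |α 2 - N| ≤ a := by
    rw [abs_of_nonneg (by linarith [hI3.1])]; linarith [hI3.2, hca]
  -- distances between G values
  have d01 : |(0:ℝ) - F| = F := by rw [zero_sub, abs_neg, abs_of_nonneg hF0]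
  have d10 : |F - (0:ℝ)| = F := by rw [sub_zero, abs_of_nonneg hF0]
  have d02 : |(0:ℝ) - N| = N := by rw [zero_sub, abs_neg, abs_of_nonneg hN0.le]
  have d20 : |N - (0:ℝ)| = N := by rw [sub_zero, abs_of_nonneg hN0.le]
  have d12 : |F - N| = N - F := by rw [abs_of_nonpos (by linarith)]; ring
  have d21 : |N - F| = N - F := by rw [abs_of_nonneg (by linarith)]
  -- Vieta
  have hr : ∀ i, α i^3 - (F+N)*α i^2 + F*N*α i - 1 = 0 := fun i => by
    linear_combination hroot i
  have hne01 : α 0 ≠ α 1 := ne_of_lt hord.1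
  have hne12 : α 1 ≠ α 2 := ne_of_lt hord.2
  have hne02 : α 0 ≠ α 2 := ne_of_lt (hord.1.trans hord.2)
  have hB01 : α 0^2 + α 0*α 1 + α 1^2 - (F+N)*(α 0 + α 1) + F*N = 0 := by
    have h : (α 0 - α 1) * (α 0^2 + α 0*α 1 + α 1^2 - (F+N)*(α 0 + α 1) + F*N) = 0 := by
      linear_combination hr 0 - hr 1
    exact (mul_eq_zero.mp h).resolve_left (sub_ne_zero.mpr hne01)
  have hB02 : α 0^2 + α 0*α 2 + α 2^2 - (F+N)*(α 0 + α 2) + F*N = 0 := by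
    have h : (α 0 - α 2) * (α 0^2 + α 0*α 2 + α 2^2 - (F+N)*(α 0 + α 2) + F*N) = 0 := by
      linear_combination hr 0 - hr 2
    exact (mul_eq_zero.mp h).resolve_left (sub_ne_zero.mpr hne02)
  have he1 : α 0 + α 1 + α 2 = F + N := by
    have h : (α 1 - α 2) * (α 0 + α 1 + α 2 - (F+N)) = 0 := by
      linear_combination hB01 - hB02
    have := (mul_eq_zero.mp h).resolve_left (sub_ne_zero.mpr hne12)
    linarith [sub_eq_zero.mp this]
  have he2 : α 0*α 1 + α 0*α 2 + α 1*α 2 = F*N := by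
    linear_combination (α 0 + α 1) * he1 - hB01
  have he3 : α 0 * α 1 * α 2 = 1 := by
    linear_combination hr 0 - α 0^2 * he1 + α 0 * he2
  -- product of betas
  have hprodβ : β 0 * (β 1 * β 2)
      = (x:ℝ) * ((x:ℝ) - F * (y:ℝ)) * ((x:ℝ) - N * (y:ℝ)) - (y:ℝ)^3 := by
    rw [hβ 0, hβ 1, hβ 2]
    linear_combination (-((x:ℝ)^2*(y:ℝ))) * he1 + ((x:ℝ)*(y:ℝ)^2) * he2 + (-((y:ℝ)^3)) * he3
  have hcast : ((x * (x - (Nat.fib n : ℤ) * y) * (x - 2 ^ n * y) - y ^ 3 : ℤ) : ℝ)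
      = (x:ℝ) * ((x:ℝ) - F * (y:ℝ)) * ((x:ℝ) - N * (y:ℝ)) - (y:ℝ)^3 := by
    push_cast
    rw [← hFdef, ← hNdef]
  have habs : |β 0 * (β 1 * β 2)| = 1 := by
    rw [hprodβ, ← hcast]
    rcases heq with h | h
    · rw [h]; norm_num
    · rw [h]; norm_num
  have hyR : (2:ℝ) ≤ |(y:ℝ)| := by
    rw [← Int.cast_abs]
    exact_mod_cast hy
  -- the error bound
  have hE : 40/(F^2*N) ≤ (0.4:ℝ)^n := by
    rw [div_le_iff₀ (by positivity)]
    have h4n : (4:ℝ)^n = N * N := by rw [hNdef, ← mul_pow]; norm_num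
    have h16 : (160:ℝ) ≤ 1.6^n := by
      calc (160:ℝ) ≤ 1.6^29 := by norm_num
      _ ≤ 1.6^n := pow_le_pow_right₀ (by norm_num) hn
    have h416 : (0.4:ℝ)^n * 4^n = 1.6^n := by rw [← mul_pow]; norm_num
    have h1 : (4:ℝ)^n ≤ 4*(F^2*N) := by
      rw [h4n]
      have := mul_le_mul_of_nonneg_right hf2 hN0.le
      linarith [this]
    have h2 : (0.4:ℝ)^n * (4:ℝ)^n ≤ (0.4:ℝ)^n * (4*(F^2*N)) :=
      mul_le_mul_of_nonneg_left h1 (by positivity)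
    linarith [h16, h416, h2]
  -- finish by case analysis on j and i
  intro i hij
  have key : ∀ (J I M : Fin 3), J ≠ I → J ≠ M → I ≠ M →
      i = I → j = J →
      |α J - G J| ≤ a → |α I - G I| ≤ a → |α M - G M| ≤ a →
      F ≤ |G J - G I| → F ≤ |G J - G M| →
      |G J - G I| ≤ N → |G J - G M| ≤ N →
      F * N / 2 ≤ |G J - G I| * |G J - G M| →
      |((x:ℝ) - α J * y) * (((x:ℝ) - α I * y) * ((x:ℝ) - α M * y))| = 1 →
      |Real.log (|β i|) - Real.log (|(y : ℝ)|) - Real.log (|α i - G j|)| ≤ (0.4:ℝ)^n := by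
    intro J I M _ _ _ hiI hjJ hcJ hcI hcM hgi hgm hgiN hgmN hgp hpr
    rw [hjJ] at hmin
    rw [hiI, hjJ, hβ I]
    refine log_aux (x:ℝ) (y:ℝ) (α J) (α I) (α M) (G J) (G I) (G M) F N a ((0.4:ℝ)^n)
      hF8192 (by linarith) ha hcJ hcI hcM hgi hgm hgiN hgmN hgp hyR hpr ?_ ?_ hE
    · rw [← hβ J, ← hβ I]; exact hmin I
    · rw [← hβ J, ← hβ M]; exact hmin M
  have hc0' : |α 0 - G 0| ≤ a := by rw [hG0]; exact hcl0
  have hc1' : |α 1 - G 1| ≤ a := by rw [hG1]; exact hcl1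
  have hc2' : |α 2 - G 2| ≤ a := by rw [hG2]; exact hcl2
  have hprm : ∀ (J I M : Fin 3),
      β J * (β I * β M) = β 0 * (β 1 * β 2) →
      |((x:ℝ) - α J * y) * (((x:ℝ) - α I * y) * ((x:ℝ) - α M * y))| = 1 := by
    intro J I M h
    rw [← hβ J, ← hβ I, ← hβ M, h]; exact habs
  fin_cases j <;> fin_cases i <;> simp only [Fin.isValue] at hij hmin ⊢ <;>
    [skip; skip; skip; skip; skip; skip; skip; skip; skip]
  · exact absurd rfl hij
  · -- j = 0, i = 1, m = 2
    exact key 0 1 2 (by decide) (by decide) (by decide) rfl rfl hc0' hc1' hc2'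
      (by rw [hG0, hG1, d01]) (by rw [hG0, hG2, d02]; linarith)
      (by rw [hG0, hG1, d01]; linarith) (by rw [hG0, hG2, d02])
      (by rw [hG0, hG1, hG2, d01, d02]; linarith [hFN0.le])
      (hprm 0 1 2 (by ring))
  · -- j = 0, i = 2, m = 1
    exact key 0 2 1 (by decide) (by decide) (by decide) rfl rfl hc0' hc2' hc1'
      (by rw [hG0, hG2, d02]; linarith) (by rw [hG0, hG1, d01])
      (by rw [hG0, hG2, d02]) (by rw [hG0, hG1, d01]; linarith)
      (by rw [hG0, hG1, hG2, d01, d02]; linarith [hFN0.le])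
      (hprm 0 2 1 (by ring))
  · -- j = 1, i = 0, m = 2
    exact key 1 0 2 (by decide) (by decide) (by decide) rfl rfl hc1' hc0' hc2'
      (by rw [hG0, hG1, d10]) (by rw [hG1, hG2, d12]; linarith)
      (by rw [hG0, hG1, d10]; linarith) (by rw [hG1, hG2, d12]; linarith)
      (by rw [hG0, hG1, hG2, d10, d12]; linarith [hq5])
      (hprm 1 0 2 (by ring))
  · exact absurd rfl hij
  · -- j = 1, i = 2, m = 0
    exact key 1 2 0 (by decide) (by decide) (by decide) rfl rfl hc1' hc2' hc0'
      (by rw [hG1, hG2, d12]; linarith) (by rw [hG0, hG1, d10])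
      (by rw [hG1, hG2, d12]; linarith) (by rw [hG0, hG1, d10]; linarith)
      (by rw [hG0, hG1, hG2, d10, d12]; linarith [hq5])
      (hprm 1 2 0 (by ring))
  · -- j = 2, i = 0, m = 1
    exact key 2 0 1 (by decide) (by decide) (by decide) rfl rfl hc2' hc0' hc1'
      (by rw [hG0, hG2, d20]; linarith) (by rw [hG1, hG2, d21]; linarith)
      (by rw [hG0, hG2, d20]) (by rw [hG1, hG2, d21]; linarith)
      (by rw [hG0, hG1, hG2, d20, d21]; linarith [hq7])
      (hprm 2 0 1 (by ring))
  · -- j = 2, i = 1, m = 0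
    exact key 2 1 0 (by decide) (by decide) (by decide) rfl rfl hc2' hc1' hc0'
      (by rw [hG1, hG2, d21]; linarith) (by rw [hG0, hG2, d20]; linarith)
      (by rw [hG1, hG2, d21]; linarith) (by rw [hG0, hG2, d20])
      (by rw [hG0, hG1, hG2, d20, d21]; linarith [hq7])
      (hprm 2 1 0 (by ring))
  · exact absurd rfl hij
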